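/- arXiv:2404.13280 — 7 statements merged into one kernel-verified Lean document; each statement's English description precedes it below -/
import Mathlib

section
/- A function f : [0,∞) → [0,∞) is ultrametric preserving (i.e., f ∘ d is an ultrametric on X whenever d is an ultrametric on X) if and only if f is increasing (monotone nondecreasing) and amenable (f⁻¹(0) = {0}). -/
open scoped NNReal

/-- `ρ` is a metric on `Y` (valued in `ℝ≥0 = [0,∞)`). -/
def IsMetric {Y : Type} (ρ : Y → Y → ℝ≥0) : Prop :=
  (∀ x y, ρ x y = 0 ↔ x = y) ∧ (∀ x y, ρ x y = ρ y x) ∧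
    (∀ x y z, ρ x y ≤ ρ x z + ρ z y)

/-- `ρ` is an ultrametric on `Y`. -/
def IsUltrametric {Y : Type} (ρ : Y → Y → ℝ≥0) : Prop :=
  (∀ x y, ρ x y = 0 ↔ x = y) ∧ (∀ x y, ρ x y = ρ y x) ∧
    (∀ x y z, ρ x y ≤ max (ρ x z) (ρ z y))

/-- `ρ` is a discrete metric: some `k > 0` with `ρ x y = k` for all distinct `x, y`. -/
def IsDiscreteMetric {Y : Type} (ρ : Y → Y → ℝ≥0) : Prop :=
  ∃ k : ℝ≥0, 0 < k ∧ ∀ x y, x ≠ y → ρ x y = k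

/-- `f` is metric preserving. -/
def MetricPreserving (f : ℝ≥0 → ℝ≥0) : Prop :=
  ∀ (Y : Type) (ρ : Y → Y → ℝ≥0), IsMetric ρ → IsMetric fun a b => f (ρ a b)

/-- `f` is ultrametric preserving. -/
def UltrametricPreserving (f : ℝ≥0 → ℝ≥0) : Prop :=
  ∀ (Y : Type) (ρ : Y → Y → ℝ≥0), IsUltrametric ρ → IsUltrametric fun a b => f (ρ a b)

/-- A class of (distance-)spaces: a predicate on pairs `(Y, ρ)`. -/
def MClass : Type 1 := ∀ Y : Type, (Y → Y → ℝ≥0) → Prop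

/-- `f ∈ P_X`: `f` preserves the class `X`. -/
def Preserves (X : MClass) (f : ℝ≥0 → ℝ≥0) : Prop :=
  ∀ (Y : Type) (ρ : Y → Y → ℝ≥0), X Y ρ → X Y fun a b => f (ρ a b)

/-- f is ultrametric preserving iff f is increasing and amenable. -/
theorem stmt_2 (f : ℝ≥0 → ℝ≥0) :
    UltrametricPreserving f ↔ Monotone f ∧ ∀ t, f t = 0 ↔ t = 0 := by
  constructor
  · intro hf
    -- amenability first
    have amen : ∀ t, f t = 0 ↔ t = 0 := by
      intro t
      rcases eq_or_ne t 0 with rfl | ht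
      · -- f 0 = 0 from any ultrametric, e.g. the zero ultrametric on Unit
        have h : IsUltrametric (fun (_ _ : Unit) => (0 : ℝ≥0)) := by
          refine ⟨by simp, by simp, by simp⟩
        obtain ⟨h1, _, _⟩ := hf Unit _ h
        simpa using (h1 () ()).mpr rfl
      · -- discrete two-point ultrametric with value t
        have h : IsUltrametric (fun (a b : Bool) => if a = b then 0 else t) := by
          refine ⟨?_, ?_, ?_⟩
          · intro x y
            by_cases hxy : x = y <;> simp [hxy, ht]
          · intro x y
            by_cases hxy : x = y <;> simp [hxy, eq_comm]
          · intro x y z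
            by_cases hxy : x = y
            · simp [hxy]
            · by_cases hxz : x = z
              · subst hxz
                simp [hxy]
              · simp [hxy, hxz]
        obtain ⟨h1, _, _⟩ := hf Bool _ h
        have := h1 true false
        simp only [if_neg (by decide : (true : Bool) ≠ false)] at this
        simp [this, ht]
    refine ⟨?_, amen⟩
    intro a b hab
    rcases eq_or_ne a 0 with rfl | ha
    · simp [(amen 0).mpr rfl]
    rcases eq_or_ne a b with rfl | hne
    · exact le_rfl
    have hab' : a < b := lt_of_le_of_ne hab hne
    -- three-point ultrametric on Fin 3: d(0,1)=a, other distinct pairs = b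
    set d : Fin 3 → Fin 3 → ℝ≥0 := fun i j =>
      if i = j then 0 else if (i = 0 ∧ j = 1) ∨ (i = 1 ∧ j = 0) then a else b with hd
    have hb : b ≠ 0 := by
      intro h; exact ha (le_antisymm (h ▸ hab) zero_le)
    have hu : IsUltrametric d := by
      refine ⟨?_, ?_, ?_⟩
      · intro x y
        fin_cases x <;> fin_cases y <;> simp [hd, ha, hb]
      · intro x y
        fin_cases x <;> fin_cases y <;> simp [hd]
      · intro x y z
        fin_cases x <;> fin_cases y <;> fin_cases z <;>
          simp [hd, le_max_iff, le_of_lt hab', le_refl]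
    obtain ⟨_, _, h3⟩ := hf (Fin 3) d hu
    have := h3 0 1 2
    simpa [hd] using this
  · rintro ⟨hmono, hamen⟩ Y ρ ⟨h1, h2, h3⟩
    refine ⟨?_, ?_, ?_⟩
    · intro x y
      rw [hamen, h1]
    · intro x y
      exact congrArg f (h2 x y)
    · intro x y z
      calc f (ρ x y) ≤ f (max (ρ x z) (ρ z y)) := hmono (h3 x y z)
        _ = max (f (ρ x z)) (f (ρ z y)) := hmono.map_max
end

section
/- A function f : [0,∞) → [0,∞) is both metric preserving and ultrametric preserving if and only if f is amenable, increasing, and subadditive. -/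
open scoped NNReal

/-- `ρ` is a discrete metric: some `k > 0` with `ρ x y = k` for all distinct `x, y`. -/
def IsDiscreteDist {Y : Type} (ρ : Y → Y → ℝ≥0) : Prop :=
  ∃ k : ℝ≥0, 0 < k ∧ ∀ x y, x ≠ y → ρ x y = k

/-- f is both metric and ultrametric preserving iff f is amenable, increasing and subadditive. -/
theorem stmt_3 (f : ℝ≥0 → ℝ≥0) :
    (MetricPreserving f ∧ UltrametricPreserving f) ↔
      ((∀ t, f t = 0 ↔ t = 0) ∧ Monotone f ∧ ∀ x y, f (x + y) ≤ f x + f y) := by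
  constructor
  · rintro ⟨hm, hu⟩
    -- f 0 = 0
    have hmet0 : IsMetric (fun (_ _ : Unit) => (0 : ℝ≥0)) := by
      refine ⟨fun x y => by simp, fun x y => rfl, fun x y z => by simp⟩
    have hf0 : f 0 = 0 := ((hm Unit _ hmet0).1 () ()).mpr rfl
    have hamen : ∀ t, f t = 0 ↔ t = 0 := by
      intro t
      constructor
      · intro hft
        by_contra ht
        have ht' : 0 < t := pos_iff_ne_zero.mpr ht
        set ρ : Bool → Bool → ℝ≥0 := fun x y => if x = y then 0 else t with hρ
        have hum : IsUltrametric ρ := by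
          refine ⟨fun x y => ?_, fun x y => ?_, fun x y z => ?_⟩
          · cases x <;> cases y <;> simp [hρ, ht]
          · cases x <;> cases y <;> simp [hρ]
          · cases x <;> cases y <;> cases z <;> simp [hρ]
        have := ((hu Bool ρ hum).1 true false)
        simp [hρ, hft] at this
      · intro h; rw [h, hf0]
    refine ⟨hamen, ?_, ?_⟩
    · -- monotone via 3-point ultrametric
      intro a b hab
      rcases eq_or_ne a 0 with ha | ha
      · simp [ha, hf0]
      have ha' : 0 < a := pos_iff_ne_zero.mpr ha
      have hb' : 0 < b := lt_of_lt_of_le ha' hab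
      set ρ : Fin 3 → Fin 3 → ℝ≥0 := fun i j =>
        if i = j then 0 else if i.val + j.val = 1 then a else b with hρ
      have hum : IsUltrametric ρ := by
        refine ⟨fun x y => ?_, fun x y => ?_, fun x y z => ?_⟩
        · fin_cases x <;> fin_cases y <;> simp [hρ, ha, hb'.ne']
        · fin_cases x <;> fin_cases y <;> simp [hρ]
        · fin_cases x <;> fin_cases y <;> fin_cases z <;>
            simp [hρ, hab, le_max_iff, le_refl, true_or, or_true]
      have h01 := (hu (Fin 3) ρ hum).2.2 0 1 2
      have e1 : ρ 0 1 = a := by simp [hρ]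
      have e2 : ρ 0 2 = b := by simp [hρ]
      have e3 : ρ 2 1 = b := by simp [hρ]
      simp only [e1, e2, e3, max_self] at h01
      exact h01
    · -- subadditive via 3-point metric
      intro x y
      rcases eq_or_ne x 0 with hx | hx
      · simp [hx, hf0]
      rcases eq_or_ne y 0 with hy | hy
      · simp [hy, hf0]
      have hx' : 0 < x := pos_iff_ne_zero.mpr hx
      have hy' : 0 < y := pos_iff_ne_zero.mpr hy
      set ρ : Fin 3 → Fin 3 → ℝ≥0 := fun i j =>
        if i = j then 0
        else if i.val + j.val = 1 then x
        else if i.val + j.val = 3 then y else x + y with hρ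
      have hmm : IsMetric ρ := by
        refine ⟨fun a b => ?_, fun a b => ?_, fun a b c => ?_⟩
        · fin_cases a <;> fin_cases b <;>
            simp [hρ, hx, hy, hx'.ne', (add_pos hx' hy').ne']
        · fin_cases a <;> fin_cases b <;> simp [hρ]
        · fin_cases a <;> fin_cases b <;> fin_cases c <;>
            simp [hρ] <;>
            first
              | rfl
              | exact le_self_add
              | exact le_add_self
              | exact le_add_right le_self_add
              | exact le_add_right le_add_self
              | exact le_add_left le_self_add
              | exact le_add_left le_add_self
              | exact (add_comm _ _).le
      have h02 := (hm (Fin 3) ρ hmm).2.2 0 2 1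
      have e1 : ρ 0 2 = x + y := by simp [hρ]
      have e2 : ρ 0 1 = x := by simp [hρ]
      have e3 : ρ 1 2 = y := by simp [hρ]
      simp only [e1, e2, e3] at h02
      exact h02
  · rintro ⟨hamen, hmono, hsub⟩
    constructor
    · rintro Y ρ ⟨h1, h2, h3⟩
      refine ⟨fun a b => by simp only [hamen, h1], fun a b => by simp only [h2 a b], fun a b c => ?_⟩
      calc f (ρ a b) ≤ f (ρ a c + ρ c b) := hmono (h3 a b c)
        _ ≤ f (ρ a c) + f (ρ c b) := hsub _ _
    · rintro Y ρ ⟨h1, h2, h3⟩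
      refine ⟨fun a b => by simp only [hamen, h1], fun a b => by simp only [h2 a b], fun a b c => ?_⟩
      calc f (ρ a b) ≤ f (max (ρ a c) (ρ c b)) := hmono (h3 a b c)
        _ = max (f (ρ a c)) (f (ρ c b)) := hmono.map_max
end

section
/- Let X be a class of metric spaces. Then P_X equals the set Am of all amenable functions if and only if: every space in X is discrete, X contains a space with at least two points, and for every (X₁,d₁) ∈ X, every discrete metric space on the same underlying set X₁ also belongs to X. -/
open scoped NNReal

open Classical in
/-- The discrete distance with value `t`. -/
noncomputable def dmet {Y : Type} (t : ℝ≥0) : Y → Y → ℝ≥0 :=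
  fun x y => if x = y then 0 else t

lemma dmet_isMetric {Y : Type} {t : ℝ≥0} (ht : 0 < t) : IsMetric (dmet (Y := Y) t) := by
  classical
  refine ⟨fun x y => ?_, fun x y => ?_, fun x y z => ?_⟩ <;> unfold dmet
  · split_ifs with h <;> simp_all [ht.ne']
  · by_cases h : x = y
    · simp [h]
    · rw [if_neg h, if_neg (fun hyx : y = x => h hyx.symm)]
  · split_ifs with h1 h2 h3 <;> simp_all

lemma dmet_isDiscrete {Y : Type} {t : ℝ≥0} (ht : 0 < t) : IsDiscreteDist (dmet (Y := Y) t) := by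
  classical
  exact ⟨t, ht, fun x y hxy => by unfold dmet; simp [hxy]⟩

open Classical in
noncomputable def badf (c : ℝ≥0) : ℝ≥0 → ℝ≥0 :=
  fun u => if u = 0 then 0 else if u = c then 3 else 1

lemma badf_amenable (c : ℝ≥0) : ∀ t, badf c t = 0 ↔ t = 0 := by
  intro t; unfold badf; split_ifs <;> simp_all

lemma badf_eq_three {c u : ℝ≥0} (h0 : u ≠ 0) (hc : u = c) : badf c u = 3 := by
  subst hc; unfold badf; simp [h0]

lemma badf_eq_one {c u : ℝ≥0} (h0 : u ≠ 0) (hc : u ≠ c) : badf c u = 1 := by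
  unfold badf; simp [h0, hc]

lemma key_lemma {Y : Type} {ρ : Y → Y → ℝ≥0} (hm : IsMetric ρ)
    (hpres : ∀ c : ℝ≥0, IsMetric fun a b => badf c (ρ a b))
    {p q r : Y} (hpq : p ≠ q) (hqr : q ≠ r) (hpr : p ≠ r)
    (hne : ρ p q ≠ ρ q r) : False := by
  obtain ⟨hz, hs, _⟩ := hm
  have hα : ρ p q ≠ 0 := fun h => hpq ((hz p q).mp h)
  have hβ : ρ q r ≠ 0 := fun h => hqr ((hz q r).mp h)
  have hγ : ρ p r ≠ 0 := fun h => hpr ((hz p r).mp h)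
  by_cases hga : ρ p r = ρ p q
  · -- c := ρ q r; long side (q,r) via p
    have htri := (hpres (ρ q r)).2.2 q r p
    dsimp only at htri
    rw [badf_eq_three hβ rfl,
        badf_eq_one (by rw [hs q p]; exact hα) (by rw [hs q p]; exact hne),
        badf_eq_one hγ (hga ▸ hne)] at htri
    norm_num at htri
  · -- c := ρ p q; long side (p,q) via r
    have htri := (hpres (ρ p q)).2.2 p q r
    dsimp only at htri
    rw [badf_eq_three hα rfl, badf_eq_one hγ hga,
        badf_eq_one (by rw [hs r q]; exact hβ) (by rw [hs r q]; exact fun h => hne h.symm)] at htri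
    norm_num at htri
/-- P_X = Am iff every space of X is discrete, X contains a space with at least two points, and X contains every discrete metric space whose underlying set carries some member of X. -/
theorem stmt_9 (X : MClass)
    (hX : ∀ (Y : Type) (ρ : Y → Y → ℝ≥0), X Y ρ → IsMetric ρ) :
    {f : ℝ≥0 → ℝ≥0 | Preserves X f} = {f : ℝ≥0 → ℝ≥0 | ∀ t, f t = 0 ↔ t = 0} ↔
      ((∀ (Y : Type) (ρ : Y → Y → ℝ≥0), X Y ρ → IsDiscreteDist ρ) ∧
        (∃ (Y : Type) (ρ : Y → Y → ℝ≥0), X Y ρ ∧ ∃ a b : Y, a ≠ b) ∧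
        (∀ (Y : Type) (ρ : Y → Y → ℝ≥0), X Y ρ →
          ∀ ρ' : Y → Y → ℝ≥0, IsMetric ρ' → IsDiscreteDist ρ' → X Y ρ')) := by
  classical
  constructor
  · intro h
    have hAm : ∀ f : ℝ≥0 → ℝ≥0, (∀ t, f t = 0 ↔ t = 0) → Preserves X f :=
      fun f hf => (Set.ext_iff.mp h f).mpr hf
    have hPr : ∀ f : ℝ≥0 → ℝ≥0, Preserves X f → ∀ t, f t = 0 ↔ t = 0 :=
      fun f hf => (Set.ext_iff.mp h f).mp hf
    have part1 : ∀ (Y : Type) (ρ : Y → Y → ℝ≥0), X Y ρ → IsDiscreteDist ρ := by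
      intro Y ρ hρX
      have hm := hX Y ρ hρX
      by_contra hnd
      have hpres : ∀ c : ℝ≥0, IsMetric fun a b => badf c (ρ a b) :=
        fun c => hX Y _ (hAm (badf c) (badf_amenable c) Y ρ hρX)
      by_cases hY : ∃ a b : Y, a ≠ b
      · obtain ⟨a, b, hab⟩ := hY
        have hs0 : ρ a b ≠ 0 := fun hh => hab ((hm.1 a b).mp hh)
        have : ∃ x y : Y, x ≠ y ∧ ρ x y ≠ ρ a b := by
          by_contra hc
          push_neg at hc
          exact hnd ⟨ρ a b, pos_iff_ne_zero.mpr hs0, fun x y hxy => hc x y hxy⟩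
        obtain ⟨x, y, hxy, hts⟩ := this
        by_cases hax : a = x
        · -- triple (b, a, y)
          refine key_lemma hm hpres (p := b) (q := a) (r := y) (Ne.symm hab)
            (hax ▸ hxy) (fun hby => hts ?_) (fun hh => hts ?_)
          · rw [← hax, ← hby, hm.2.1 a b]
          · rw [← hax, ← hh, hm.2.1 b a]
        · by_cases hay : a = y
          · -- triple (b, a, x)
            refine key_lemma hm hpres (p := b) (q := a) (r := x) (Ne.symm hab)
              (fun hh => hax hh) (fun hbx => hts ?_) (fun hh => hts ?_)
            · rw [← hbx, ← hay, hm.2.1 b a]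
            · rw [← hay, hm.2.1 x a, ← hh, hm.2.1 b a]
          · by_cases hxa : ρ x a = ρ x y
            · by_cases hya : ρ y a = ρ x y
              · -- triple (x, a, b)
                refine key_lemma hm hpres (p := x) (q := a) (r := b)
                  (fun hh => hax hh.symm) hab (fun hxb => hts ?_) (fun hh => hts ?_)
                · rw [← hxa, hxb, hm.2.1 b a]
                · rw [← hxa]; exact hh
              · -- triple (x, y, a)
                exact key_lemma hm hpres (p := x) (q := y) (r := a) hxy
                  (fun hh => hay hh.symm) (fun hh => hax hh.symm)
                  (fun hh => hya hh.symm)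
            · -- triple (y, x, a)
              refine key_lemma hm hpres (p := y) (q := x) (r := a) (Ne.symm hxy)
                (fun hh => hax hh.symm) (fun hh => hay hh.symm) (fun hh => hxa ?_)
              rw [← hh, hm.2.1 y x]
      · push_neg at hY
        exact hnd ⟨1, one_pos, fun x y hxy => absurd (hY x y) hxy⟩
    refine ⟨part1, ?_, ?_⟩
    · by_contra hno
      push_neg at hno
      have hpre : Preserves X (fun _ => 0) := by
        intro Y ρ hρX
        have hm := hX Y ρ hρX
        have he : (fun a b : Y => (0 : ℝ≥0)) = ρ := by
          funext a b
          exact ((hm.1 a b).mpr (hno Y ρ hρX a b)).symm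
        rwa [he]
      have := (hPr _ hpre 1).mp rfl
      norm_num at this
    · intro Y ρ hρX ρ' hm' hd'
      obtain ⟨k', hk', hρ'⟩ := hd'
      have hm := hX Y ρ hρX
      by_cases hY : ∃ a b : Y, a ≠ b
      · obtain ⟨k, hk, hρk⟩ := part1 Y ρ hρX
        set f : ℝ≥0 → ℝ≥0 := fun u => if u = k then k' else u with hfdef
        have hf : ∀ t, f t = 0 ↔ t = 0 := by
          intro t
          simp only [hfdef]
          split_ifs with hh
          · subst hh; simp [hk'.ne', hk.ne']
          · rfl
        have hmem := hAm f hf Y ρ hρX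
        have he : (fun a b => f (ρ a b)) = ρ' := by
          funext x y
          by_cases hxy : x = y
          · rw [(hm.1 x y).mpr hxy, (hm'.1 x y).mpr hxy]
            exact (hf 0).mpr rfl
          · rw [hρk x y hxy, hρ' x y hxy]
            simp [hfdef]
        rwa [he] at hmem
      · push_neg at hY
        have he : ρ' = ρ := by
          funext x y
          rw [(hm'.1 x y).mpr (hY x y), (hm.1 x y).mpr (hY x y)]
        rwa [he]
  · rintro ⟨h1, ⟨Y0, ρ0, hX0, a0, b0, hab0⟩, h3⟩
    ext f
    simp only [Set.mem_setOf_eq]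
    have hm0 := hX Y0 ρ0 hX0
    constructor
    · intro hf
      have hf0 : f 0 = 0 := by
        have hm := hX Y0 _ (hf Y0 ρ0 hX0)
        have h1' := (hm.1 a0 a0).mpr rfl
        dsimp only at h1'
        rwa [(hm0.1 a0 a0).mpr rfl] at h1'
      intro t
      constructor
      · intro hft
        by_contra ht
        have htpos : 0 < t := pos_iff_ne_zero.mpr ht
        have hmem : X Y0 (dmet t) :=
          h3 Y0 ρ0 hX0 (dmet t) (dmet_isMetric htpos) (dmet_isDiscrete htpos)
        have hm := hX Y0 _ (hf Y0 _ hmem)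
        have hd : dmet (Y := Y0) t a0 b0 = t := by unfold dmet; simp [hab0]
        have hcon := (hm.1 a0 b0).mp (by dsimp only; rw [hd]; exact hft)
        exact hab0 hcon
      · rintro rfl; exact hf0
    · intro hf Y ρ hρX
      obtain ⟨k, hk, hρk⟩ := h1 Y ρ hρX
      have hm := hX Y ρ hρX
      have hf0 : f 0 = 0 := (hf 0).mpr rfl
      apply h3 Y ρ hρX
      · refine ⟨fun x y => ?_, fun x y => by dsimp only; rw [hm.2.1 x y], fun x y z => ?_⟩
        · dsimp only; rw [hf (ρ x y)]; exact hm.1 x y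
        · dsimp only
          by_cases hxy : x = y
          · rw [(hm.1 x y).mpr hxy, hf0]; exact zero_le
          · rw [hρk x y hxy]
            by_cases hxz : x = z
            · rw [(hm.1 x z).mpr hxz, hf0, zero_add, hρk z y (hxz ▸ hxy)]
            · rw [hρk x z hxz]
              exact le_self_add
      · refine ⟨f k, pos_iff_ne_zero.mpr fun hh => hk.ne' ((hf k).mp hh), ?_⟩
        intro x y hxy; dsimp only; rw [hρk x y hxy]
end

section
/- Let A be a nonempty set of metric preserving functions. The following are equivalent: (i) there exists a class X of metric spaces with P_X = A; (ii) A is a submonoid of the monoid of all functions [0,∞) → [0,∞) under composition; (iii) A is a submonoid of the monoid of metric preserving functions under composition. -/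
open scoped NNReal

lemma nndist_isMetric : IsMetric (fun a b : ℝ≥0 => nndist a b) :=
  ⟨fun x y => nndist_eq_zero, fun x y => nndist_comm x y,
    fun x y z => nndist_triangle x z y⟩

/-- For a nonempty set A of metric preserving functions, TFAE: (i) P_X = A for some class X of metric spaces; (ii) A is a submonoid of (F, ∘); (iii) A is a submonoid of (P_M, ∘). -/
theorem stmt_12 (A : Set (ℝ≥0 → ℝ≥0)) (hne : A.Nonempty)
    (hA : ∀ f ∈ A, MetricPreserving f) :
    List.TFAE
      [∃ X : MClass, (∀ (Y : Type) (ρ : Y → Y → ℝ≥0), X Y ρ → IsMetric ρ) ∧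
          {f : ℝ≥0 → ℝ≥0 | Preserves X f} = A,
        id ∈ A ∧ ∀ f ∈ A, ∀ g ∈ A, f ∘ g ∈ A,
        (∀ f ∈ A, MetricPreserving f) ∧ id ∈ A ∧ ∀ f ∈ A, ∀ g ∈ A, f ∘ g ∈ A] := by
  tfae_have 1 → 2 := by
    rintro ⟨X, hXm, hP⟩
    constructor
    · rw [← hP]; exact fun Y ρ h => h
    · intro f hf g hg
      rw [← hP] at hf hg ⊢
      intro Y ρ h
      exact hf Y _ (hg Y ρ h)
  tfae_have 2 → 3 := fun h => ⟨hA, h⟩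
  tfae_have 3 → 2 := fun h => h.2
  tfae_have 2 → 1 := by
    rintro ⟨hid, hcomp⟩
    refine ⟨fun Y ρ => ∃ f ∈ A, ∃ h : Y = ℝ≥0,
        ρ = fun a b => f (nndist (cast h a) (cast h b)), ?_, ?_⟩
    · rintro Y ρ ⟨f, hf, rfl, rfl⟩
      exact hA f hf ℝ≥0 _ nndist_isMetric
    · ext f
      constructor
      · intro hPf
        have hbase : ∃ g ∈ A, ∃ h : (ℝ≥0 : Type) = ℝ≥0,
            (fun a b : ℝ≥0 => nndist a b) =
              fun a b => g (nndist (cast h a) (cast h b)) :=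
          ⟨id, hid, rfl, rfl⟩
        obtain ⟨g, hg, h, heq⟩ := hPf ℝ≥0 _ hbase
        have key : ∀ x : ℝ≥0, f x = g x := by
          intro x
          have := congrFun (congrFun heq 0) x
          simpa [NNReal.nndist_zero_eq_val] using this
        have : f = g := funext key
        rwa [this]
      · intro hf Y ρ hρ
        obtain ⟨g, hg, h, rfl⟩ := hρ
        exact ⟨f ∘ g, hcomp f hf g hg, h, rfl⟩
  tfae_finish
end

section
/- If A is a submonoid (under composition, containing the identity) of the monoid of metric preserving functions, then there exists a class X of metric spaces with P_X = A. Explicitly, fixing a metric space (X,d) whose set of distance values is all of [0,∞), the class X = {(X, f∘d) : f ∈ A} satisfies P_X = A. -/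
open scoped NNReal

/-- If A is a submonoid of the metric preserving functions then, for a fixed metric space (X₀, d) whose distance set is all of [0,∞), the class X = {(X₀, f∘d) : f ∈ A} satisfies P_X = A. -/
theorem stmt_13 (X₀ : Type) (d : X₀ → X₀ → ℝ≥0) (hd : IsMetric d)
    (hsurj : ∀ t : ℝ≥0, ∃ x y : X₀, d x y = t)
    (A : Set (ℝ≥0 → ℝ≥0)) (hA : ∀ f ∈ A, MetricPreserving f)
    (hid : id ∈ A) (hcomp : ∀ f ∈ A, ∀ g ∈ A, f ∘ g ∈ A)
    (X : MClass)
    (hXdef : ∀ (Y : Type) (ρ : Y → Y → ℝ≥0),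
      X Y ρ ↔ ∃ f ∈ A, ∃ h : Y = X₀, ∀ a b : Y, ρ a b = f (d (cast h a) (cast h b))) :
    {g : ℝ≥0 → ℝ≥0 | Preserves X g} = A := by
  ext g
  simp only [Set.mem_setOf_eq]
  constructor
  · intro hg
    have hXd : X X₀ d := by
      rw [hXdef]
      exact ⟨id, hid, rfl, fun a b => rfl⟩
    have := hg X₀ d hXd
    rw [hXdef] at this
    obtain ⟨f, hf, h, hfd⟩ := this
    have hgf : g = f := by
      funext t
      obtain ⟨x, y, hxy⟩ := hsurj t
      have := hfd x y
      simpa [hxy] using this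
    exact hgf ▸ hf
  · intro hg Y ρ hρ
    rw [hXdef] at hρ ⊢
    obtain ⟨f, hf, h, hfd⟩ := hρ
    exact ⟨g ∘ f, hcomp g hg f hf, h, fun a b => by simp [hfd a b]⟩
end

section
/- There exists a class X of metric spaces such that P_X equals the set SI of all amenable, increasing, subadditive functions [0,∞) → [0,∞). -/
open scoped NNReal

/-- ultrametrics are metrics -/
lemma ultra_isMetric {Y : Type} {ρ : Y → Y → ℝ≥0} (h : IsUltrametric ρ) : IsMetric ρ :=
  ⟨h.1, h.2.1, fun x y z => (h.2.2 x y z).trans (max_le (le_add_right le_rfl) (le_add_left le_rfl))⟩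

lemma not_equiv_fin3_of_card {Y : Type} [Fintype Y] (h : Fintype.card Y ≠ 3) :
    ¬ Nonempty (Y ≃ Fin 3) := by
  rintro ⟨e⟩
  exact h (by simpa using Fintype.card_congr e)

/-- There is a class X of metric spaces with P_X = SI. -/
theorem stmt_14 :
    ∃ X : MClass, (∀ (Y : Type) (ρ : Y → Y → ℝ≥0), X Y ρ → IsMetric ρ) ∧
      {f : ℝ≥0 → ℝ≥0 | Preserves X f} =
        {f : ℝ≥0 → ℝ≥0 |
          (∀ t, f t = 0 ↔ t = 0) ∧ Monotone f ∧ ∀ x y, f (x + y) ≤ f x + f y} := by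
  refine ⟨fun Y ρ => IsMetric ρ ∧ (Nonempty (Y ≃ Fin 3) → IsUltrametric ρ),
    fun Y ρ h => h.1, ?_⟩
  ext f
  simp only [Set.mem_setOf_eq]
  constructor
  · intro hf
    -- amenability
    have hamen : ∀ t, f t = 0 ↔ t = 0 := by
      intro t
      rcases eq_or_ne t 0 with rfl | ht
      · -- f 0 = 0 : use two-point discrete space with k = 1
        have hρ : IsMetric (fun x y : Bool => if x = y then 0 else 1) := by
          refine ⟨?_, ?_, ?_⟩
          · intro x y; by_cases h : x = y <;> simp [h]
          · intro x y; by_cases h : x = y <;> simp [h, eq_comm]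
          · intro x y z
            by_cases hxy : x = y
            · simp [hxy]
            · by_cases hxz : x = z
              · subst hxz; simp [hxy]
              · simp [hxy, hxz]
        have := (hf Bool _ ⟨hρ, fun he => absurd he (not_equiv_fin3_of_card (by simp))⟩).1.1
        have := (this true true).2 rfl
        simpa using this
      · -- f t ≠ 0 : discrete space with k = t
        have hρ : IsMetric (fun x y : Bool => if x = y then 0 else t) := by
          refine ⟨?_, ?_, ?_⟩
          · intro x y; by_cases h : x = y <;> simp [h, ht]
          · intro x y; by_cases h : x = y <;> simp [h, eq_comm]
          · intro x y z
            by_cases hxy : x = y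
            · simp [hxy]
            · by_cases hxz : x = z
              · subst hxz; simp [hxy]
              · simp [hxy, hxz]
        have h2 := (hf Bool _ ⟨hρ, fun he => absurd he (not_equiv_fin3_of_card (by simp))⟩).1.1
        have h3 := (h2 true false)
        simp only [if_neg (by simp : (true : Bool) ≠ false)] at h3
        simp only [ht, iff_false]
        intro hft
        exact absurd (h3.1 hft) (by simp)
    have hf0 : f 0 = 0 := (hamen 0).2 rfl
    -- monotone
    have hmono : Monotone f := by
      intro a b hab
      rcases eq_or_ne a 0 with rfl | ha
      · simp [hf0]
      have hb' : b ≠ 0 := fun h => ha (le_antisymm (h ▸ hab) (zero_le : 0 ≤ a))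
      set ρ : Fin 3 → Fin 3 → ℝ≥0 :=
        fun i j => if i = j then 0 else if i = 2 ∨ j = 2 then b else a with hρdef
      have hult : IsUltrametric ρ := by
        refine ⟨?_, ?_, ?_⟩
        · intro x y
          fin_cases x <;> fin_cases y <;> simp [hρdef, ha, hb'] <;> decide
        · intro x y
          fin_cases x <;> fin_cases y <;> simp [hρdef, or_comm]
        · intro x y z
          fin_cases x <;> fin_cases y <;> fin_cases z <;>
            simp [hρdef, le_max_iff, hab, le_refl, true_or, or_true]
      have him := hf (Fin 3) ρ ⟨ultra_isMetric hult, fun _ => hult⟩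
      have hiu := him.2 ⟨Equiv.refl _⟩
      have h012 : f (ρ 0 1) ≤ max (f (ρ 0 2)) (f (ρ 2 1)) := hiu.2.2 0 1 2
      simpa [hρdef] using h012
    refine ⟨hamen, hmono, ?_⟩
    -- subadditive
    intro x y
    rcases eq_or_ne x 0 with rfl | hx
    · simp [hf0]
    rcases eq_or_ne y 0 with rfl | hy
    · simp [hf0]
    set g : Fin 4 → ℝ≥0 := ![0, x, x + y, x + y + 1] with hgdef
    have hgs : StrictMono g := by
      rw [Fin.strictMono_iff_lt_succ]
      intro i
      fin_cases i <;>
        simp only [hgdef, Fin.succ, Matrix.cons_val_zero, Matrix.cons_val_one, Matrix.head_cons,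
          Fin.mk_zero, Fin.mk_one, Matrix.cons_val_two, Matrix.tail_cons, Matrix.cons_val_three,
          Fin.castSucc] <;>
        first
        | exact pos_iff_ne_zero.mpr hx
        | exact lt_add_of_pos_right _ (pos_iff_ne_zero.mpr hy)
        | exact lt_add_of_pos_right _ one_pos
    have hginj : Function.Injective g := hgs.injective
    set ρ : Fin 4 → Fin 4 → ℝ≥0 := fun i j => nndist (g i) (g j) with hρdef
    have hρmet : IsMetric ρ := by
      refine ⟨?_, ?_, ?_⟩
      · intro a b
        constructor
        · intro h; exact hginj (nndist_eq_zero.mp h)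
        · rintro rfl; simp [hρdef]
      · intro a b; exact nndist_comm _ _
      · intro a b c; exact nndist_triangle _ _ _
    have him := hf (Fin 4) ρ ⟨hρmet, fun he => absurd he (not_equiv_fin3_of_card (by simp))⟩
    have htri : f (ρ 0 2) ≤ f (ρ 0 1) + f (ρ 1 2) := him.1.2.2 0 2 1
    have h02 : ρ 0 2 = x + y := by
      simp [hρdef, hgdef, NNReal.nndist_eq, tsub_eq_zero_of_le]
    have h01 : ρ 0 1 = x := by
      simp [hρdef, hgdef, NNReal.nndist_eq, tsub_eq_zero_of_le]
    have h12 : ρ 1 2 = y := by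
      simp [hρdef, hgdef, NNReal.nndist_eq, tsub_eq_zero_of_le, le_add_right]
    rw [h02, h01, h12] at htri
    exact htri
  · rintro ⟨hamen, hmono, hsub⟩
    intro Y ρ ⟨hmet, hult⟩
    constructor
    · refine ⟨?_, ?_, ?_⟩
      · intro a b
        show f (ρ a b) = 0 ↔ a = b
        rw [hamen, hmet.1]
      · intro a b
        show f (ρ a b) = f (ρ b a)
        rw [hmet.2.1]
      · intro a b c
        show f (ρ a b) ≤ f (ρ a c) + f (ρ c b)
        calc f (ρ a b) ≤ f (ρ a c + ρ c b) := hmono (hmet.2.2 a b c)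
          _ ≤ f (ρ a c) + f (ρ c b) := hsub _ _
    · intro he
      have hu := hult he
      refine ⟨?_, ?_, ?_⟩
      · intro a b
        show f (ρ a b) = 0 ↔ a = b
        rw [hamen, hu.1]
      · intro a b
        show f (ρ a b) = f (ρ b a)
        rw [hu.2.1]
      · intro a b c
        show f (ρ a b) ≤ max (f (ρ a c)) (f (ρ c b))
        calc f (ρ a b) ≤ f (max (ρ a c) (ρ c b)) := hmono (hu.2.2 a b c)
          _ = max (f (ρ a c)) (f (ρ c b)) := hmono.map_max
end

section
/- There is no class X of nonempty metric spaces such that P_X = {f₁, id}, where f₁(0)=1, f₁(1)=0, and f₁(t)=t otherwise; even though {f₁, id} is a submonoid of all functions [0,∞)→[0,∞) under composition. -/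
open scoped NNReal

/-- There is no class X of nonempty metric spaces with P_X = {f₁, id}, where f₁ swaps 0 and 1 and is the identity elsewhere. -/
theorem stmt_18 :
    ¬ ∃ X : MClass,
        (∀ (Y : Type) (ρ : Y → Y → ℝ≥0), X Y ρ → IsMetric ρ ∧ Nonempty Y) ∧
        {f : ℝ≥0 → ℝ≥0 | Preserves X f} =
          {fun t : ℝ≥0 => if t = 0 then 1 else if t = 1 then 0 else t,
            (id : ℝ≥0 → ℝ≥0)} := by
  rintro ⟨X, hX, hset⟩
  set f₁ : ℝ≥0 → ℝ≥0 := fun t => if t = 0 then 1 else if t = 1 then 0 else t with hf₁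
  by_cases hne : ∃ (Y : Type) (ρ : Y → Y → ℝ≥0), X Y ρ
  · obtain ⟨Y, ρ, hYρ⟩ := hne
    have hf : Preserves X f₁ := by
      have : f₁ ∈ {f : ℝ≥0 → ℝ≥0 | Preserves X f} := by
        rw [hset]; left; rfl
      exact this
    have h2 := hX Y (fun a b => f₁ (ρ a b)) (hf Y ρ hYρ)
    obtain ⟨⟨h0, _, _⟩, ⟨y⟩⟩ := h2
    have hm := (hX Y ρ hYρ).1.1 y y
    have hzero : ρ y y = 0 := hm.mpr rfl
    have : f₁ (ρ y y) = 0 := (h0 y y).mpr rfl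
    rw [hzero] at this
    simp [hf₁] at this
  · push_neg at hne
    have hc : Preserves X (fun _ => (0 : ℝ≥0)) := by
      intro Y ρ h; exact absurd h (hne Y ρ)
    have : (fun _ : ℝ≥0 => (0 : ℝ≥0)) ∈ ({f₁, id} : Set (ℝ≥0 → ℝ≥0)) := by
      rw [← hset]; exact hc
    rcases this with h | h
    · have := congrFun h 0
      simp [hf₁] at this
    · have := congrFun h 1
      simp at this
end
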